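/- Let A → R be a ring homomorphism, and suppose R is finitely generated and projective as a right A-module. Then the canonical map ζ : R° → R* from the right finite dual A-coring to the right A-linear dual of R, given on generators by ζ(class of p* ⊗ p)(r) = p*(p·r), is bijective. -/

import Mathlib

open MulOpposite

universe u

variable (A R : Type u) [Ring A] [Ring R] (φ : A →+* R)

/-- An object of the category `𝒜_R`: a right `R`-module (encoded as a module
over `Rᵐᵒᵖ`) which, via restriction of scalars along `φ`, is finitely generated
and projective as a right `A`-module. -/
structure FDObj : Type (u + 1) where
  carrier : Type u
  [acg : AddCommGroup carrier]
  [modR : Module Rᵐᵒᵖ carrier]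
  [modA : Module Aᵐᵒᵖ carrier]
  compat : ∀ (a : Aᵐᵒᵖ) (x : carrier), a • x = (RingHom.op φ a) • x
  fin : Module.Finite Aᵐᵒᵖ carrier
  proj : Module.Projective Aᵐᵒᵖ carrier

attribute [instance] FDObj.acg FDObj.modR FDObj.modA

variable {A R φ}

/-- The right `A`-linear dual of an object `P` of `𝒜_R`. -/
abbrev FDObj.dual (P : FDObj A R φ) : Type u := P.carrier →ₗ[Aᵐᵒᵖ] A

/-- Composition of a dual element with a right `R`-linear map, `q* ↦ q* ∘ t`. -/
def FDObj.compDual {P Q : FDObj A R φ} (t : P.carrier →ₗ[Rᵐᵒᵖ] Q.carrier)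
    (g : Q.dual) : P.dual where
  toFun := fun p => g (t p)
  map_add' := by intro p q; simp
  map_smul' := by
    intro a p
    simp only [RingHom.id_apply]
    rw [P.compat a p, map_smul, ← Q.compat a (t p), map_smul]

variable (A R φ)

/-- Generators of the finite dual: triples `(P, p*, p)`. -/
def FDGen : Type (u + 1) := Σ P : FDObj A R φ, P.dual × P.carrier

/-- The relations defining the finite dual coring `R°`: additivity in each tensor slot
(yielding the tensor products `P* ⊗_{T_P} P`) together with the relations
`q* ⊗ t·p − q*·t ⊗ p` for right `R`-linear maps `t : P → Q`. -/
def FDRel : Set (FreeAbelianGroup (FDGen A R φ)) :=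
  { x | (∃ (P : FDObj A R φ) (f g : P.dual) (p : P.carrier),
          x = FreeAbelianGroup.of ⟨P, (f + g, p)⟩
              - FreeAbelianGroup.of ⟨P, (f, p)⟩ - FreeAbelianGroup.of ⟨P, (g, p)⟩) ∨
        (∃ (P : FDObj A R φ) (f : P.dual) (p q : P.carrier),
          x = FreeAbelianGroup.of ⟨P, (f, p + q)⟩
              - FreeAbelianGroup.of ⟨P, (f, p)⟩ - FreeAbelianGroup.of ⟨P, (f, q)⟩) ∨
        (∃ (P Q : FDObj A R φ) (t : P.carrier →ₗ[Rᵐᵒᵖ] Q.carrier)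
            (g : Q.dual) (p : P.carrier),
          x = FreeAbelianGroup.of ⟨Q, (g, t p)⟩
              - FreeAbelianGroup.of ⟨P, (FDObj.compDual t g, p)⟩) }

/-- The right finite dual `R°` of the ring extension `φ : A → R`, as an abelian group. -/
def FinDual : Type (u + 1) :=
  FreeAbelianGroup (FDGen A R φ) ⧸ AddSubgroup.closure (FDRel A R φ)

noncomputable instance : AddCommGroup (FinDual A R φ) :=
  QuotientAddGroup.Quotient.addCommGroup _

/-- The right `A`-linear dual `R* = Hom_A(R, A)` of `R` (as a right `A`-module via `φ`),
realized as the additive subgroup of `R →+ A` of right `A`-linear maps. -/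
def RStar : AddSubgroup (R →+ A) where
  carrier := { f | ∀ (r : R) (a : A), f (r * φ a) = f r * a }
  add_mem' := by
    intro f g hf hg r a
    simp [hf r a, hg r a, add_mul]
  zero_mem' := by intro r a; simp
  neg_mem' := by
    intro f hf r a
    simp [hf r a, neg_mul]

/-- The functional `ζ(p* ⊗ p) : r ↦ p*(p·r)` attached to a generator. -/
def zetaGen (g : FDGen A R φ) : R →+ A where
  toFun := fun r => g.2.1 ((op r : Rᵐᵒᵖ) • g.2.2)
  map_zero' := by simp
  map_add' := by
    intro r s
    show g.2.1 ((op (r + s) : Rᵐᵒᵖ) • g.2.2) = _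
    rw [op_add, add_smul, map_add]

lemma zetaGen_mem (g : FDGen A R φ) : zetaGen A R φ g ∈ RStar A R φ := by
  intro r a
  have h1 : (op (r * φ a) : Rᵐᵒᵖ) = (RingHom.op φ (op a)) * op r := rfl
  have h2 : ((RingHom.op φ (op a)) * op r) • g.2.2
      = (RingHom.op φ (op a)) • ((op r : Rᵐᵒᵖ) • g.2.2) := mul_smul _ _ _
  have h3 : (RingHom.op φ (op a)) • ((op r : Rᵐᵒᵖ) • g.2.2)
      = (op a : Aᵐᵒᵖ) • ((op r : Rᵐᵒᵖ) • g.2.2) := (g.1.compat (op a) _).symm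
  show g.2.1 ((op (r * φ a) : Rᵐᵒᵖ) • g.2.2) = g.2.1 ((op r : Rᵐᵒᵖ) • g.2.2) * a
  rw [h1, h2, h3, map_smul]
  rfl

/-- `ζ` on the free abelian group on generators. -/
noncomputable def zetaHat : FreeAbelianGroup (FDGen A R φ) →+ ↥(RStar A R φ) :=
  FreeAbelianGroup.lift (fun g => ⟨zetaGen A R φ g, zetaGen_mem A R φ g⟩)

lemma FDRel_le_ker : AddSubgroup.closure (FDRel A R φ) ≤ (zetaHat A R φ).ker := by
  rw [AddSubgroup.closure_le]
  rintro x hx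
  simp only [SetLike.mem_coe, AddMonoidHom.mem_ker]
  obtain (⟨P, f, g, p, rfl⟩ | ⟨P, f, p, q, rfl⟩ | ⟨P, Q, t, g, p, rfl⟩) := hx
  · rw [map_sub, map_sub, sub_sub, sub_eq_zero]
    apply Subtype.ext; apply AddMonoidHom.ext; intro r
    erw [FreeAbelianGroup.lift_apply_of, FreeAbelianGroup.lift_apply_of, FreeAbelianGroup.lift_apply_of]
    simp only [zetaHat, FreeAbelianGroup.lift_apply_of, AddSubgroup.coe_add,
      AddMonoidHom.add_apply, zetaGen, AddMonoidHom.coe_mk, ZeroHom.coe_mk,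
      LinearMap.add_apply, Pi.add_apply]
  · rw [map_sub, map_sub, sub_sub, sub_eq_zero]
    apply Subtype.ext; apply AddMonoidHom.ext; intro r
    erw [FreeAbelianGroup.lift_apply_of, FreeAbelianGroup.lift_apply_of, FreeAbelianGroup.lift_apply_of]
    simp only [zetaHat, FreeAbelianGroup.lift_apply_of, AddSubgroup.coe_add,
      AddMonoidHom.add_apply, zetaGen, AddMonoidHom.coe_mk, ZeroHom.coe_mk,
      smul_add, map_add]
    exact map_add f _ _
  · rw [map_sub, sub_eq_zero]
    apply Subtype.ext; apply AddMonoidHom.ext; intro r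
    erw [FreeAbelianGroup.lift_apply_of, FreeAbelianGroup.lift_apply_of]
    simp only [zetaHat, FreeAbelianGroup.lift_apply_of, zetaGen, AddMonoidHom.coe_mk,
      ZeroHom.coe_mk, FDObj.compDual, LinearMap.coe_mk, AddHom.coe_mk]
    exact congrArg g (t.map_smul (MulOpposite.op r) p).symm

/-- The canonical map `ζ : R° → R*`. -/
noncomputable def zeta : FinDual A R φ →+ ↥(RStar A R φ) :=
  QuotientAddGroup.lift _ (zetaHat A R φ) (FDRel_le_ker A R φ)




section Aux

variable (A R : Type u) [Ring A] [Ring R] (φ : A →+* R)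

noncomputable def fdMk (x : FreeAbelianGroup (FDGen A R φ)) : FinDual A R φ :=
  QuotientAddGroup.mk x

lemma fdMk_rel {x : FreeAbelianGroup (FDGen A R φ)} (hx : x ∈ FDRel A R φ) :
    fdMk A R φ x = 0 := by
  apply (QuotientAddGroup.eq_zero_iff _).mpr
  exact AddSubgroup.subset_closure hx

lemma fdMk_add_rel (P : FDObj A R φ) (f g : P.dual) (p : P.carrier) :
    fdMk A R φ (FreeAbelianGroup.of ⟨P, (f + g, p)⟩)
      = fdMk A R φ (FreeAbelianGroup.of ⟨P, (f, p)⟩)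
        + fdMk A R φ (FreeAbelianGroup.of ⟨P, (g, p)⟩) := by
  have := fdMk_rel A R φ (Or.inl ⟨P, f, g, p, rfl⟩)
  simp only [fdMk, QuotientAddGroup.mk_sub] at this ⊢
  rw [sub_sub] at this
  exact sub_eq_zero.mp this

lemma fdMk_t_rel (P Q : FDObj A R φ) (t : P.carrier →ₗ[Rᵐᵒᵖ] Q.carrier)
    (g : Q.dual) (p : P.carrier) :
    fdMk A R φ (FreeAbelianGroup.of ⟨Q, (g, t p)⟩)
      = fdMk A R φ (FreeAbelianGroup.of ⟨P, (FDObj.compDual t g, p)⟩) := by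
  have := fdMk_rel A R φ (Or.inr (Or.inr ⟨P, Q, t, g, p, rfl⟩))
  simp only [fdMk, QuotientAddGroup.mk_sub] at this ⊢
  exact sub_eq_zero.mp this

variable [Module Aᵐᵒᵖ R]
variable (hcompat : ∀ (a : Aᵐᵒᵖ) (r : R), a • r = r * φ a.unop)
variable (hfin : Module.Finite Aᵐᵒᵖ R) (hproj : Module.Projective Aᵐᵒᵖ R)

/-- `R` itself as an object of `𝒜_R`. -/
def PR : FDObj A R φ where
  carrier := R
  compat := fun a x => by
    rw [hcompat a x]
    show _ = (op (φ a.unop) : Rᵐᵒᵖ) • x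
    rw [op_smul_eq_mul]
  fin := hfin
  proj := hproj

def oneEl : (PR A R φ hcompat hfin hproj).carrier := (1 : R)

def fembed (f : R →ₗ[Aᵐᵒᵖ] A) : (PR A R φ hcompat hfin hproj).dual := f

def funembed (x : (PR A R φ hcompat hfin hproj).carrier) : R := x

/-- Right multiplication, `t_p : R → P`, `r ↦ p · r`, as a right `R`-linear map. -/
def tP (P : FDObj A R φ) (p : P.carrier) :
    (PR A R φ hcompat hfin hproj).carrier →ₗ[Rᵐᵒᵖ] P.carrier where
  toFun := fun r => (op (funembed A R φ hcompat hfin hproj r) : Rᵐᵒᵖ) • p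
  map_add' := by
    intro r s
    show (op (funembed A R φ hcompat hfin hproj r + funembed A R φ hcompat hfin hproj s) : Rᵐᵒᵖ) • p = _
    rw [op_add, add_smul]
  map_smul' := by
    intro s r
    show (op (s • funembed A R φ hcompat hfin hproj r) : Rᵐᵒᵖ) • p
        = s • ((op (funembed A R φ hcompat hfin hproj r) : Rᵐᵒᵖ) • p)
    set r' := funembed A R φ hcompat hfin hproj r
    have h1 : s • r' = r' * s.unop := by
      rw [← op_unop s, op_smul_eq_mul, unop_op]
    rw [h1]
    have h2 : (op (r' * s.unop) : Rᵐᵒᵖ) = s * op r' := by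
      rw [op_mul, op_unop]
    rw [h2, mul_smul]

lemma tP_one (P : FDObj A R φ) (p : P.carrier) :
    tP A R φ hcompat hfin hproj P p (oneEl A R φ hcompat hfin hproj) = p := by
  show (op (1 : R) : Rᵐᵒᵖ) • p = p
  rw [op_one, one_smul]

noncomputable def emb (f : R →ₗ[Aᵐᵒᵖ] A) : FinDual A R φ :=
  fdMk A R φ (FreeAbelianGroup.of
    ⟨PR A R φ hcompat hfin hproj, (fembed A R φ hcompat hfin hproj f, oneEl A R φ hcompat hfin hproj)⟩)

lemma fembed_add (f g : R →ₗ[Aᵐᵒᵖ] A) :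
    fembed A R φ hcompat hfin hproj (f + g)
      = fembed A R φ hcompat hfin hproj f + fembed A R φ hcompat hfin hproj g := rfl

lemma emb_add (f g : R →ₗ[Aᵐᵒᵖ] A) :
    emb A R φ hcompat hfin hproj (f + g)
      = emb A R φ hcompat hfin hproj f + emb A R φ hcompat hfin hproj g := by
  unfold emb
  rw [fembed_add]
  exact fdMk_add_rel A R φ _ _ _ _

lemma emb_zero : emb A R φ hcompat hfin hproj 0 = 0 := by
  have := emb_add A R φ hcompat hfin hproj 0 0
  rw [add_zero] at this
  exact add_eq_left.mp this.symm

lemma emb_neg (f : R →ₗ[Aᵐᵒᵖ] A) :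
    emb A R φ hcompat hfin hproj (-f) = - emb A R φ hcompat hfin hproj f := by
  have := emb_add A R φ hcompat hfin hproj f (-f)
  rw [add_neg_cancel, emb_zero A R φ hcompat hfin hproj] at this
  exact (neg_eq_of_add_eq_zero_right this.symm).symm

def genDual (g : FDGen A R φ) : R →ₗ[Aᵐᵒᵖ] A :=
  FDObj.compDual (tP A R φ hcompat hfin hproj g.1 g.2.2) g.2.1

lemma gen_eq_emb (g : FDGen A R φ) :
    fdMk A R φ (FreeAbelianGroup.of g)
      = emb A R φ hcompat hfin hproj (genDual A R φ hcompat hfin hproj g) := by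
  obtain ⟨P, f, p⟩ := g
  have h := fdMk_t_rel A R φ (PR A R φ hcompat hfin hproj) P
    (tP A R φ hcompat hfin hproj P p) f (oneEl A R φ hcompat hfin hproj)
  rw [tP_one] at h
  exact h

lemma surj_emb (x : FinDual A R φ) :
    ∃ f, x = emb A R φ hcompat hfin hproj f := by
  obtain ⟨y, rfl⟩ := QuotientAddGroup.mk_surjective x
  induction y using FreeAbelianGroup.induction_on with
  | zero => exact ⟨0, (emb_zero A R φ hcompat hfin hproj).symm⟩
  | of g => exact ⟨_, gen_eq_emb A R φ hcompat hfin hproj g⟩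
  | neg g _ =>
      refine ⟨-(genDual A R φ hcompat hfin hproj g), ?_⟩
      rw [emb_neg]
      show fdMk A R φ (-(FreeAbelianGroup.of g)) = _
      rw [show fdMk A R φ (-(FreeAbelianGroup.of g))
            = - fdMk A R φ (FreeAbelianGroup.of g) from rfl,
        gen_eq_emb A R φ hcompat hfin hproj g]
  | add y z hy hz =>
      obtain ⟨f, hf⟩ := hy
      obtain ⟨g, hg⟩ := hz
      refine ⟨f + g, ?_⟩
      rw [emb_add]
      have hf' : fdMk A R φ y = emb A R φ hcompat hfin hproj f := hf
      have hg' : fdMk A R φ z = emb A R φ hcompat hfin hproj g := hg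
      show fdMk A R φ (y + z) = _
      rw [show fdMk A R φ (y + z) = fdMk A R φ y + fdMk A R φ z from rfl, hf', hg']

lemma zeta_emb_apply (f : R →ₗ[Aᵐᵒᵖ] A) (r : R) :
    ((zeta A R φ (emb A R φ hcompat hfin hproj f) : R →+ A)) r = f r := by
  show (zetaHat A R φ (FreeAbelianGroup.of
      ⟨PR A R φ hcompat hfin hproj,
        (fembed A R φ hcompat hfin hproj f, oneEl A R φ hcompat hfin hproj)⟩) : R →+ A) r = f r
  rw [zetaHat]
  erw [FreeAbelianGroup.lift_apply_of]
  show f ((1 : R) * r) = f r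
  rw [one_mul]

end Aux

/-- Let `A → R` be a ring homomorphism and suppose `R` is finitely
generated and projective as a right `A`-module.  Then the canonical map
`ζ : R° → R*` from the right finite dual `A`-coring to the right `A`-linear dual of `R`,
given on generators by `ζ(p* ⊗ p)(r) = p*(p·r)`, is bijective. -/
theorem zeta_bijective_of_finite_projective
    (A R : Type u) [Ring A] [Ring R] (φ : A →+* R)
    [Module Aᵐᵒᵖ R]
    (hcompat : ∀ (a : Aᵐᵒᵖ) (r : R), a • r = r * φ a.unop)
    (hfin : Module.Finite Aᵐᵒᵖ R)
    (hproj : Module.Projective Aᵐᵒᵖ R) :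
    Function.Bijective (zeta A R φ) := by
  constructor
  · intro x y hxy
    obtain ⟨f, rfl⟩ := surj_emb A R φ hcompat hfin hproj x
    obtain ⟨g, rfl⟩ := surj_emb A R φ hcompat hfin hproj y
    have hfg : f = g := by
      apply LinearMap.ext
      intro r
      have h1 := congrArg (fun h => ((h : ↥(RStar A R φ)) : R →+ A) r) hxy
      simpa only [zeta_emb_apply] using h1
    rw [hfg]
  · intro s
    have hs := s.2
    refine ⟨emb A R φ hcompat hfin hproj
      ⟨⟨fun r => (s : R →+ A) r, (s : R →+ A).map_add⟩, ?_⟩, ?_⟩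
    · intro a r
      simp only [RingHom.id_apply, AddHom.coe_mk]
      rw [hcompat a r, hs r a.unop]
      rw [← op_unop a, op_smul_eq_mul, unop_op]
    · apply Subtype.ext
      apply AddMonoidHom.ext
      intro r
      exact zeta_emb_apply A R φ hcompat hfin hproj _ r
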